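/- Let (x_k)_{k ∈ ℕ} be a sequence in G such that f(x_k) < ⊤ for all k, f(x_{k+1}) < f(x_k) for all k (the values are strictly decreasing), and f(−x_k) = ⊤ for all k. Then the family (x_k) is linearly independent over ℤ: for every finitely supported function c : ℕ → ℤ with ∑_k c(k) • x_k = 0, one has c = 0. (Abstract form of the paper's Corollary giving linear independence in the homology cobordism group Θ³_ℤ.) -/
import Mathlib


open scoped ENNReal

section Aux

variable {G : Type*} [AddCommGroup G] {f : G → ℝ≥0∞}

lemma aux_nsmul (hf : ∀ x y : G, min (f x) (f y) ≤ f (x + y)) (y : G) :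
    ∀ n : ℕ, f y ≤ f ((n + 1) • y) := by
  intro n
  induction n with
  | zero => simp
  | succ n ih =>
    have h := hf ((n + 1) • y) y
    rw [← succ_nsmul] at h
    exact le_trans (le_min ih le_rfl) h

lemma aux_top (hf : ∀ x y : G, min (f x) (f y) ≤ f (x + y)) (h0 : f 0 = ⊤)
    (y : G) (hy : f y = ⊤) : ∀ n : ℕ, f (n • y) = ⊤ := by
  intro n
  cases n with
  | zero => simpa using h0
  | succ n =>
    have := aux_nsmul hf y n
    rw [hy] at this
    exact top_le_iff.mp this

lemma aux_nonpos (hf : ∀ x y : G, min (f x) (f y) ≤ f (x + y)) (h0 : f 0 = ⊤)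
    (y : G) (hy : f (-y) = ⊤) (z : ℤ) (hz : z ≤ 0) : f (z • y) = ⊤ := by
  have hrw : z • y = (-z).toNat • (-y) := by
    rw [← natCast_zsmul, Int.toNat_of_nonneg (by omega), smul_neg, neg_zsmul, neg_neg]
  rw [hrw]
  exact aux_top hf h0 (-y) hy _

lemma aux_zsmul (hf : ∀ x y : G, min (f x) (f y) ≤ f (x + y)) (h0 : f 0 = ⊤)
    (y : G) (hy : f (-y) = ⊤) (z : ℤ) : f y ≤ f (z • y) := by
  rcases le_or_gt z 0 with h | h
  · rw [aux_nonpos hf h0 y hy z h]; exact le_top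
  · obtain ⟨n, rfl⟩ : ∃ n : ℕ, z = (n : ℤ) + 1 := ⟨(z - 1).toNat, by omega⟩
    have hrw : ((n : ℤ) + 1) • y = (n + 1) • y := by
      rw [← natCast_zsmul]; push_cast; ring_nf
    rw [hrw]
    exact aux_nsmul hf y n

lemma aux_pos (hf : ∀ x y : G, min (f x) (f y) ≤ f (x + y)) (h0 : f 0 = ⊤)
    (y : G) (hy : f (-y) = ⊤) (z : ℤ) (hz : 0 < z) : f (z • y) ≤ f y := by
  have hdecomp : z • y + (1 - z) • y = y := by
    rw [← add_smul]; ring_nf; exact one_smul _ _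
  have h := hf (z • y) ((1 - z) • y)
  rw [hdecomp, aux_nonpos hf h0 y hy (1 - z) (by omega)] at h
  simpa using h

lemma aux_min (hf : ∀ x y : G, min (f x) (f y) ≤ f (x + y)) (h0 : f 0 = ⊤)
    (y : G) (hy : f (-y) = ⊤) (z : ℤ) (hz : z ≠ 0) :
    min (f (z • y)) (f ((-z) • y)) ≤ f y := by
  rcases lt_or_gt_of_ne hz with h | h
  · exact le_trans (min_le_right _ _) (aux_pos hf h0 y hy (-z) (by omega))
  · exact le_trans (min_le_left _ _) (aux_pos hf h0 y hy z h)

lemma aux_sum (hf : ∀ x y : G, min (f x) (f y) ≤ f (x + y)) (h0 : f 0 = ⊤)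
    (b : ℝ≥0∞) (hb : b < ⊤) (s : Finset ℕ) (g : ℕ → G)
    (hg : ∀ k ∈ s, b < f (g k)) : b < f (∑ k ∈ s, g k) := by
  induction s using Finset.cons_induction with
  | empty => simpa [h0] using hb
  | cons a s ha ih =>
    rw [Finset.sum_cons]
    refine lt_of_lt_of_le ?_ (hf _ _)
    rw [lt_min_iff]
    exact ⟨hg a (Finset.mem_cons_self a s),
      ih fun k hk => hg k (Finset.mem_cons_of_mem hk)⟩

end Aux

/-- Abstract form of the corollary on linear independence: a sequence `x : ℕ → G` with
`f (x k) < ⊤` for all `k`, strictly decreasing values `f (x (k+1)) < f (x k)`, and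
`f (-(x k)) = ⊤` for all `k`, is linearly independent over `ℤ`: any finitely supported
`c : ℕ →₀ ℤ` with `∑ k, c k • x k = 0` is zero. -/
theorem stmt_5 {G : Type*} [AddCommGroup G] (f : G → ℝ≥0∞)
    (hf : ∀ x y : G, min (f x) (f y) ≤ f (x + y)) (h0 : f 0 = ⊤)
    (x : ℕ → G)
    (hfin : ∀ k : ℕ, f (x k) < ⊤)
    (hdec : ∀ k : ℕ, f (x (k + 1)) < f (x k))
    (hneg : ∀ k : ℕ, f (-(x k)) = ⊤) :
    ∀ c : ℕ →₀ ℤ, (c.sum fun k n => n • x k) = 0 → c = 0 := by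
  intro c hc
  by_contra hne
  have hs : c.support.Nonempty := Finsupp.support_nonempty_iff.mpr hne
  set m := c.support.max' hs with hm
  have hmem : m ∈ c.support := c.support.max'_mem hs
  have hcm : c m ≠ 0 := Finsupp.mem_support_iff.mp hmem
  have hanti : StrictAnti fun k => f (x k) := strictAnti_nat_of_succ_lt hdec
  -- rewrite the sum
  have hsum : c m • x m + ∑ k ∈ c.support.erase m, c k • x k = 0 := by
    rw [Finsupp.sum] at hc
    rwa [Finset.add_sum_erase _ (fun k => c k • x k) hmem]
  have h1eq : c m • x m = ∑ k ∈ c.support.erase m, (-(c k)) • x k := by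
    have : c m • x m = -∑ k ∈ c.support.erase m, c k • x k := by
      linear_combination (norm := abel) hsum
    rw [this, ← Finset.sum_neg_distrib]
    exact Finset.sum_congr rfl fun k _ => (neg_smul _ _).symm
  have h2eq : (-(c m)) • x m = ∑ k ∈ c.support.erase m, c k • x k := by
    rw [neg_smul, h1eq, ← Finset.sum_neg_distrib]
    exact Finset.sum_congr rfl fun k _ => by rw [neg_smul, neg_neg]
  -- each term on the right has value strictly greater than f (x m)
  have hkey : ∀ (k : ℕ), k ∈ c.support.erase m → ∀ z : ℤ, f (x m) < f (z • x k) := by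
    intro k hk z
    have hklt : k < m :=
      lt_of_le_of_ne (c.support.le_max' k (Finset.mem_of_mem_erase hk))
        (Finset.ne_of_mem_erase hk)
    exact lt_of_lt_of_le (hanti hklt) (aux_zsmul hf h0 (x k) (hneg k) z)
  have h1 : f (x m) < f ((c m) • x m) := by
    rw [h1eq]
    exact aux_sum hf h0 _ (hfin m) _ _ fun k hk => hkey k hk _
  have h2 : f (x m) < f ((-(c m)) • x m) := by
    rw [h2eq]
    exact aux_sum hf h0 _ (hfin m) _ _ fun k hk => hkey k hk _
  have := aux_min hf h0 (x m) (hneg m) (c m) hcm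
  rw [min_def] at this
  split_ifs at this <;> [exact absurd (lt_of_lt_of_le h1 this) (lt_irrefl _);
    exact absurd (lt_of_lt_of_le h2 this) (lt_irrefl _)]
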